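/- The coefficient matrix [[4,0,0,0],[22,64,0,0],[30,164,62,0],[1,24,16,2]] is not totally positive: the determinant of the 3×3 submatrix in the lower left corner, [[22,64,0],[30,164,62],[1,24,16]], equals -1760. -/

import Mathlib

/-- A matrix is totally positive if every square minor (taken with strictly increasing
row and column indices) has positive determinant. -/
def Matrix.TotallyPositive {m : ℕ} (M : Matrix (Fin m) (Fin m) ℝ) : Prop :=
  ∀ (k : ℕ) (r : Fin k → Fin m) (c : Fin k → Fin m),
    StrictMono r → StrictMono c → 0 < (M.submatrix r c).det

theorem stmt_17
    (M : Matrix (Fin 4) (Fin 4) ℝ)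
    (hM : M = !![4, 0, 0, 0; 22, 64, 0, 0; 30, 164, 62, 0; 1, 24, 16, 2]) :
    (!![22, 64, 0; 30, 164, 62; 1, 24, 16] : Matrix (Fin 3) (Fin 3) ℝ).det = -1760 ∧
    ¬ M.TotallyPositive := by
  constructor
  · simp [Matrix.det_fin_three]; norm_num
  · intro h
    have := h 3 ![1, 2, 3] ![0, 1, 2]
      (by intro a b hab; fin_cases a <;> fin_cases b <;> simp_all <;> omega)
      (by intro a b hab; fin_cases a <;> fin_cases b <;> simp_all <;> omega)
    rw [hM] at this
    rw [Matrix.det_fin_three] at this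
    simp [Matrix.det_fin_three, Matrix.submatrix_apply] at this
    norm_num at this
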